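/- With G, M, B, φ, A as in the context: for every subgroup H of G, the induced map B^H → M^H on H-invariants is surjective; consequently, the kernel A = ker(φ) satisfies H¹(H, A) = 0 for every subgroup H of G (that is, A is a coflasque ℤ[G]-lattice). -/

import Mathlib

/-- The Klein four group `ℤ/2 × ℤ/2`, written multiplicatively. -/
abbrev K4 : Type := Multiplicative (ZMod 2 × ZMod 2)

/-- The generator `g` of the Klein four group. -/
def kg : K4 := Multiplicative.ofAdd (1, 0)

/-- The generator `h` of the Klein four group. -/
def kh : K4 := Multiplicative.ofAdd (0, 1)

/-- The underlying `F₂`-vector space of the module `Ω^{-m} F₂`: basis vectors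
`e₁, …, e_{m+1}` live in the first factor and `e_{m+2}, …, e_{2m+1}` in the second. -/
abbrev MM (m : ℕ) : Type := (Fin (m + 1) → ZMod 2) × (Fin m → ZMod 2)

/-- The basis vector `e_{j+1}` (for `0 ≤ j ≤ m`, i.e. `e_i` with `1 ≤ i ≤ m+1`). -/
def ea (m : ℕ) (j : Fin (m + 1)) : MM m := (Pi.single j 1, 0)

/-- The basis vector `e_{m+1+(j+1)}` (for `0 ≤ j ≤ m-1`, i.e. `e_{m+1+i}` with `1 ≤ i ≤ m`). -/
def eb (m : ℕ) (j : Fin m) : MM m := (0, Pi.single j 1)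

/-- The permutation `ℤ[G]`-module `B = (ℤ[G])^{⊕ m} ⊕ ℤ^{⊕ (m+1)}`. -/
abbrev BB (m : ℕ) : Type := (Fin m → MonoidAlgebra ℤ K4) × (Fin (m + 1) → ℤ)

/-- The `ℤ[G]`-module generator `f_{i+1}` of the `(i+1)`-st free summand of `B`
(for `0 ≤ i ≤ m-1`, i.e. `f_i` with `1 ≤ i ≤ m`). -/
noncomputable def fa (m : ℕ) (i : Fin m) : BB m := (Pi.single i 1, 0)

/-- The generator `f_{m+(j+1)}` of the `(j+1)`-st trivial summand of `B`
(for `0 ≤ j ≤ m`, i.e. `f_{m+i}` with `1 ≤ i ≤ m+1`). -/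
noncomputable def fb (m : ℕ) (j : Fin (m + 1)) : BB m := (0, Pi.single j 1)

/-- The action of `γ ∈ G` on `B`: left multiplication on each `ℤ[G]`-summand and the
trivial action on each `ℤ`-summand. -/
noncomputable def bAct (m : ℕ) (γ : K4) (b : BB m) : BB m :=
  (fun i => MonoidAlgebra.of ℤ K4 γ * b.1 i, b.2)

lemma eval_inj {m n : ℕ} (g : Fin m → Fin n) (hg : Function.Injective g)
    (v : Fin m → ZMod 2) (k : Fin m) :
    (∑ i, Pi.single (M := fun _ => ZMod 2) (g i) (v i)) (g k) = v k := by
  rw [Finset.sum_apply]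
  rw [Finset.sum_eq_single k]
  · simp
  · intro i _ hik
    exact Pi.single_eq_of_ne (M := fun _ => ZMod 2) (fun h => hik (hg h).symm) _
  · simp

lemma L1 {m : ℕ} (v : Fin m → ZMod 2)
    (h : ∑ i, Pi.single (M := fun _ => ZMod 2) (Fin.castSucc i) (v i) = 0) : v = 0 := by
  funext k
  have := congrFun h (Fin.castSucc k)
  rwa [eval_inj _ (Fin.castSucc_injective m) v k] at this

lemma L2 {m : ℕ} (v : Fin m → ZMod 2)
    (h : ∑ i, Pi.single (M := fun _ => ZMod 2) (Fin.succ i) (v i) = 0) : v = 0 := by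
  funext k
  have := congrFun h (Fin.succ k)
  rwa [eval_inj _ (Fin.succ_injective m) v k] at this

lemma eval_succ_at_cast {m : ℕ} (v : Fin m → ZMod 2) (k : Fin m) :
    (∑ i, Pi.single (M := fun _ => ZMod 2) (Fin.succ i) (v i)) (Fin.castSucc k)
      = if h : 0 < (k : ℕ) then v ⟨(k : ℕ) - 1, by omega⟩ else 0 := by
  rw [Finset.sum_apply]
  split
  · next h =>
    rw [Finset.sum_eq_single (⟨(k : ℕ) - 1, by omega⟩ : Fin m)]
    · rw [show Fin.succ (⟨(k : ℕ) - 1, by omega⟩ : Fin m) = Fin.castSucc k by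
        ext; simp; omega]
      simp
    · intro i _ hik
      apply Pi.single_eq_of_ne
      intro hc
      apply hik
      have : (i : ℕ) + 1 = (k : ℕ) := by
        have h5 := congrArg Fin.val hc
        simp at h5
        omega
      ext; simp; omega
    · simp
  · next h =>
    apply Finset.sum_eq_zero
    intro i _
    apply Pi.single_eq_of_ne
    intro hc
    have := congrArg Fin.val hc
    simp at this
    omega

lemma L3 {m : ℕ} (v : Fin m → ZMod 2)
    (h : (∑ i, Pi.single (M := fun _ => ZMod 2) (Fin.succ i) (v i))
        + (∑ i, Pi.single (M := fun _ => ZMod 2) (Fin.castSucc i) (v i)) = 0) : v = 0 := by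
  have key : ∀ n : ℕ, ∀ hn : n < m, v ⟨n, hn⟩ = 0 := by
    intro n
    induction n using Nat.strong_induction_on with
    | _ n ih =>
      intro hn
      have h2 := congrFun h (Fin.castSucc ⟨n, hn⟩)
      rw [Pi.add_apply, eval_succ_at_cast, eval_inj _ (Fin.castSucc_injective m)] at h2
      simp only [Pi.zero_apply] at h2
      rcases Nat.eq_zero_or_pos n with h0 | h0
      · subst h0
        simpa using h2
      · rw [dif_pos h0] at h2
        have hprev : v ⟨n - 1, by omega⟩ = 0 := ih (n-1) (by omega) (by omega)
        rw [hprev, zero_add] at h2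
        exact h2
  funext k
  simpa using key k.val k.isLt
section
variable {m : ℕ} (ρ : Representation (ZMod 2) K4 (MM m))

lemma expand (x : MM m) : x = ∑ j, x.1 j • ea m j + ∑ i, x.2 i • eb m i := by
  have h1 : ∀ (n : ℕ) (w : Fin n → ZMod 2) (j : Fin n),
      w j • Pi.single (M := fun _ => ZMod 2) j 1 = Pi.single j (w j) := by
    intro n w j
    rw [← Pi.single_smul, smul_eq_mul, mul_one]
  ext k
  · rw [Prod.fst_add, Prod.fst_sum, Prod.fst_sum]
    simp only [ea, eb, Prod.smul_mk, smul_zero, h1]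
    rw [Finset.univ_sum_single, Finset.sum_const, smul_zero]
    simp
  · rw [Prod.snd_add, Prod.snd_sum, Prod.snd_sum]
    simp only [ea, eb, Prod.smul_mk, smul_zero, h1]
    rw [Finset.univ_sum_single, Finset.sum_const, smul_zero]
    simp

noncomputable def Sg (x : MM m) : MM m := ∑ i, x.2 i • ea m (Fin.castSucc i)
noncomputable def Sh (x : MM m) : MM m := ∑ i, x.2 i • ea m (Fin.succ i)

lemma Sg_eq (x : MM m) :
    Sg x = (∑ i, Pi.single (M := fun _ => ZMod 2) (Fin.castSucc i) (x.2 i), 0) := by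
  rw [Prod.ext_iff]
  constructor
  · rw [Sg, Prod.fst_sum]
    simp only [ea, Prod.smul_mk, smul_zero]
    exact Finset.sum_congr rfl (fun i _ => by rw [← Pi.single_smul, smul_eq_mul, mul_one])
  · rw [Sg, Prod.snd_sum]
    simp [ea]

lemma Sh_eq (x : MM m) :
    Sh x = (∑ i, Pi.single (M := fun _ => ZMod 2) (Fin.succ i) (x.2 i), 0) := by
  rw [Prod.ext_iff]
  constructor
  · rw [Sh, Prod.fst_sum]
    simp only [ea, Prod.smul_mk, smul_zero]
    exact Finset.sum_congr rfl (fun i _ => by rw [← Pi.single_smul, smul_eq_mul, mul_one])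
  · rw [Sh, Prod.snd_sum]
    simp [ea]

lemma rho_g (hga : ∀ j : Fin (m + 1), ρ kg (ea m j) = ea m j)
    (hgb : ∀ j : Fin m, ρ kg (eb m j) = ea m j.castSucc + eb m j)
    (x : MM m) : ρ kg x = x + Sg x := by
  conv_lhs => rw [expand x]
  rw [map_add, map_sum, map_sum]
  simp only [map_smul, hga, hgb, smul_add]
  rw [Finset.sum_add_distrib, Sg]
  calc ∑ j, x.1 j • ea m j + (∑ i, x.2 i • ea m (Fin.castSucc i) + ∑ i, x.2 i • eb m i)
      = (∑ j, x.1 j • ea m j + ∑ i, x.2 i • eb m i) + ∑ i, x.2 i • ea m (Fin.castSucc i) := by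
        abel
    _ = x + ∑ i, x.2 i • ea m (Fin.castSucc i) := by rw [← expand x]

lemma rho_h (hha : ∀ j : Fin (m + 1), ρ kh (ea m j) = ea m j)
    (hhb : ∀ j : Fin m, ρ kh (eb m j) = ea m j.succ + eb m j)
    (x : MM m) : ρ kh x = x + Sh x := by
  conv_lhs => rw [expand x]
  rw [map_add, map_sum, map_sum]
  simp only [map_smul, hha, hhb, smul_add]
  rw [Finset.sum_add_distrib, Sh]
  calc ∑ j, x.1 j • ea m j + (∑ i, x.2 i • ea m (Fin.succ i) + ∑ i, x.2 i • eb m i)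
      = (∑ j, x.1 j • ea m j + ∑ i, x.2 i • eb m i) + ∑ i, x.2 i • ea m (Fin.succ i) := by
        abel
    _ = x + ∑ i, x.2 i • ea m (Fin.succ i) := by rw [← expand x]

lemma rho_g_Sh (hga : ∀ j : Fin (m + 1), ρ kg (ea m j) = ea m j)
    (x : MM m) : ρ kg (Sh x) = Sh x := by
  rw [Sh, map_sum]
  simp only [map_smul, hga]

lemma k4_cases : ∀ γ : K4, γ = 1 ∨ γ = kg ∨ γ = kh ∨ γ = kg * kh := by decide

lemma inv_snd (hga : ∀ j : Fin (m + 1), ρ kg (ea m j) = ea m j)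
    (hha : ∀ j : Fin (m + 1), ρ kh (ea m j) = ea m j)
    (hgb : ∀ j : Fin m, ρ kg (eb m j) = ea m j.castSucc + eb m j)
    (hhb : ∀ j : Fin m, ρ kh (eb m j) = ea m j.succ + eb m j)
    (γ : K4) (hγ : γ ≠ 1) (x : MM m) (hx : ρ γ x = x) : x.2 = 0 := by
  rcases k4_cases γ with h | h | h | h
  · exact absurd h hγ
  · subst h
    rw [rho_g ρ hga hgb] at hx
    have hs : Sg x = 0 := by
      have := add_eq_left.mp hx
      exact this
    rw [Sg_eq] at hs
    exact L1 x.2 (congrArg Prod.fst hs)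
  · subst h
    rw [rho_h ρ hha hhb] at hx
    have hs : Sh x = 0 := add_eq_left.mp hx
    rw [Sh_eq] at hs
    exact L2 x.2 (congrArg Prod.fst hs)
  · subst h
    rw [map_mul, Module.End.mul_apply, rho_h ρ hha hhb, map_add, rho_g ρ hga hgb,
      rho_g_Sh ρ hga] at hx
    have hs : Sg x + Sh x = 0 := by
      have h2 : x + (Sg x + Sh x) = x := by rw [← add_assoc]; exact hx
      exact add_eq_left.mp h2
    rw [Sg_eq, Sh_eq] at hs
    have h3 := congrArg Prod.fst hs
    simp only [Prod.fst_add, Prod.fst_zero] at h3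
    exact L3 x.2 ((add_comm _ _).trans h3)

lemma zval_smul (a : ZMod 2) (v : MM m) : ((a.val : ℤ)) • v = a • v := by
  rw [← Int.cast_smul_eq_zsmul (ZMod 2)]
  congr 1
  push_cast [ZMod.natCast_val, ZMod.cast_id]
  ring

lemma bAct_one (b : BB m) : bAct m 1 b = b := by
  unfold bAct
  simp only [map_one, one_mul]

lemma bAct_fst_zero (γ : K4) (b : BB m) (h : b.1 = 0) : bAct m γ b = b := by
  have h2 : bAct m γ b = (b.1, b.2) := by
    unfold bAct
    rw [h]
    congr 1
    funext i
    simp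
  rw [h2]

lemma sum_fb_fst (c : Fin (m+1) → ℤ) : (∑ j, c j • fb m j).1 = 0 := by
  rw [Prod.fst_sum]
  simp [fb]

lemma part1 (φ : BB m →+ MM m)
    (hga : ∀ j : Fin (m + 1), ρ kg (ea m j) = ea m j)
    (hha : ∀ j : Fin (m + 1), ρ kh (ea m j) = ea m j)
    (hgb : ∀ j : Fin m, ρ kg (eb m j) = ea m j.castSucc + eb m j)
    (hhb : ∀ j : Fin m, ρ kh (eb m j) = ea m j.succ + eb m j)
    (hfa : ∀ i : Fin m, φ (fa m i) = eb m i)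
    (hfb : ∀ j : Fin (m + 1), φ (fb m j) = ea m j)
    (H : Subgroup K4) (x : MM m) (hx : ∀ γ ∈ H, ρ γ x = x) :
    ∃ b : BB m, (∀ γ ∈ H, bAct m γ b = b) ∧ φ b = x := by
  by_cases hH : ∀ γ ∈ H, γ = (1 : K4)
  · refine ⟨∑ j, ((x.1 j).val : ℤ) • fb m j + ∑ i, ((x.2 i).val : ℤ) • fa m i, ?_, ?_⟩
    · intro γ hγ
      rw [hH γ hγ]
      exact bAct_one _
    · rw [map_add, map_sum, map_sum]
      simp only [map_zsmul, hfa, hfb, zval_smul]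
      exact (expand x).symm
  · push_neg at hH
    obtain ⟨γ, hγH, hγ1⟩ := hH
    have hx2 : x.2 = 0 := inv_snd ρ hga hha hgb hhb γ hγ1 x (hx γ hγH)
    refine ⟨∑ j, ((x.1 j).val : ℤ) • fb m j, ?_, ?_⟩
    · intro δ _
      exact bAct_fst_zero δ _ (sum_fb_fst _)
    · rw [map_sum]
      simp only [map_zsmul, hfb, zval_smul]
      have := expand x
      rw [hx2] at this
      simp only [Pi.zero_apply, zero_smul, Finset.sum_const, smul_zero, add_zero] at this
      exact this.symm
end

lemma k4_id1 : ∀ a b : K4, a * b⁻¹ = a⁻¹ * b := by decide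
lemma k4_id2 : ∀ a b : K4, (a⁻¹ * b)⁻¹ * b = a := by decide
lemma k4_id3 : ∀ r s y : K4, r * (s⁻¹ * y)⁻¹ = r * y⁻¹ * s := by decide
lemma k4_id4 : ∀ r y : K4, (r * y⁻¹)⁻¹ * r = y := by decide

lemma sum_single_apply (g : K4 → ℤ) (y : K4) :
    (∑ x : K4, MonoidAlgebra.single (R := ℤ) x (g x)).coeff y = g y := by
  classical
  rw [MonoidAlgebra.coeff_sum, Finsupp.finset_sum_apply]
  rw [Finset.sum_eq_single y]
  · simp
  · intro x _ hxy
    rw [MonoidAlgebra.coeff_single]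
    exact Finsupp.single_eq_of_ne' hxy
  · simp

lemma coboundary (H : Subgroup K4) (c : H → MonoidAlgebra ℤ K4)
    (hc : ∀ σ τ : H, c (σ * τ) = c σ + MonoidAlgebra.of ℤ K4 (σ : K4) * c τ) :
    ∃ b : MonoidAlgebra ℤ K4, ∀ σ : H, c σ = MonoidAlgebra.of ℤ K4 (σ : K4) * b - b := by
  classical
  set rep : K4 → K4 := fun x => (QuotientGroup.mk (s := H) x).out with hrepdef
  have hmk : ∀ x : K4, (QuotientGroup.mk (s := H) (rep x)) = QuotientGroup.mk x := by
    intro x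
    exact Quotient.out_eq _
  have hmem : ∀ x : K4, rep x * x⁻¹ ∈ H := by
    intro x
    have h1 : (rep x)⁻¹ * x ∈ H := (QuotientGroup.eq).mp (hmk x)
    rw [k4_id1]
    exact h1
  have hrepH : ∀ σ : K4, σ ∈ H → ∀ x : K4, rep (σ⁻¹ * x) = rep x := by
    intro σ hσ x
    have h2 : QuotientGroup.mk (s := H) (σ⁻¹ * x) = QuotientGroup.mk x := by
      rw [QuotientGroup.eq, k4_id2]
      exact hσ
    simp only [hrepdef, h2]
  set g : K4 → ℤ := fun x => (c ⟨rep x * x⁻¹, hmem x⟩).coeff (rep x) with hgdef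
  refine ⟨∑ x : K4, MonoidAlgebra.single x (g x), ?_⟩
  intro σ
  ext y
  rw [MonoidAlgebra.coeff_sub, Finsupp.sub_apply]
  rw [MonoidAlgebra.of_apply, MonoidAlgebra.single_mul_apply, one_mul]
  rw [sum_single_apply, sum_single_apply]
  -- goal: c σ y = g (σ⁻¹ * y) - g y
  have hkey : g ((σ : K4)⁻¹ * y) = g y + (c σ).coeff y := by
    have hsub : (⟨rep ((σ:K4)⁻¹ * y) * ((σ:K4)⁻¹ * y)⁻¹, hmem _⟩ : H)
        = ⟨rep y * y⁻¹, hmem y⟩ * σ := by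
      apply Subtype.ext
      push_cast
      rw [hrepH (σ:K4) σ.2 y, k4_id3]
    have h3 : g ((σ:K4)⁻¹ * y)
        = (c (⟨rep y * y⁻¹, hmem y⟩ * σ)).coeff (rep ((σ:K4)⁻¹ * y)) := by
      rw [hgdef]
      simp only
      rw [hsub]
    rw [h3, hrepH (σ:K4) σ.2 y, hc]
    rw [MonoidAlgebra.coeff_add, Finsupp.add_apply, MonoidAlgebra.of_apply, MonoidAlgebra.single_mul_apply, one_mul]
    congr 1
    exact congrArg (c σ).coeff (k4_id4 (rep y) y)
  rw [hkey]
  ring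

lemma k4_sq : ∀ x : K4, x * x = 1 := by decide

lemma bAct_sub {m : ℕ} (γ : K4) (b b' : BB m) :
    bAct m γ (b - b') = bAct m γ b - bAct m γ b' := by
  refine Prod.ext_iff.mpr ⟨?_, ?_⟩
  · funext i
    simp [bAct, mul_sub]
  · simp [bAct]

/-- With `G` the Klein four group, `M = Ω^{-m} F₂`, `B = (ℤ[G])^{⊕m} ⊕ ℤ^{⊕(m+1)}` and
`φ : B → M` the `ℤ[G]`-linear map with `φ(f_i) = e_{m+1+i}` (`1 ≤ i ≤ m`) and
`φ(f_{m+i}) = e_i` (`1 ≤ i ≤ m+1`):  for every subgroup `H ≤ G` the induced map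
`B^H → M^H` is surjective; consequently the kernel `A = ker φ` satisfies `H¹(H, A) = 0`
for every subgroup `H ≤ G` (every 1-cocycle valued in `A` is a coboundary), i.e. `A` is
a coflasque `ℤ[G]`-lattice. -/
theorem stmt_7 (m : ℕ) (hm : 1 ≤ m)
    (ρ : Representation (ZMod 2) K4 (MM m))
    (hga : ∀ j : Fin (m + 1), ρ kg (ea m j) = ea m j)
    (hha : ∀ j : Fin (m + 1), ρ kh (ea m j) = ea m j)
    (hgb : ∀ j : Fin m, ρ kg (eb m j) = ea m j.castSucc + eb m j)
    (hhb : ∀ j : Fin m, ρ kh (eb m j) = ea m j.succ + eb m j)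
    (φ : BB m →+ MM m)
    (hequiv : ∀ (γ : K4) (b : BB m), φ (bAct m γ b) = ρ γ (φ b))
    (hfa : ∀ i : Fin m, φ (fa m i) = eb m i)
    (hfb : ∀ j : Fin (m + 1), φ (fb m j) = ea m j) :
    (∀ (H : Subgroup K4) (x : MM m), (∀ γ ∈ H, ρ γ x = x) →
      ∃ b : BB m, (∀ γ ∈ H, bAct m γ b = b) ∧ φ b = x) ∧
    (∀ (H : Subgroup K4) (c : H → BB m),
      (∀ σ : H, φ (c σ) = 0) →
      (∀ σ τ : H, c (σ * τ) = c σ + bAct m (σ : K4) (c τ)) →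
      ∃ a : BB m, φ a = 0 ∧ ∀ σ : H, c σ = bAct m (σ : K4) a - a) := by
  constructor
  · exact fun H x hx => part1 ρ φ hga hha hgb hhb hfa hfb H x hx
  · intro H c hc0 hcoc
    have hc1 : c 1 = 0 := by
      have h := hcoc 1 1
      rw [mul_one, OneMemClass.coe_one, bAct_one] at h
      exact (left_eq_add.mp h)
    have hsnd : ∀ σ : H, (c σ).2 = 0 := by
      intro σ
      have hσσ : σ * σ = 1 := Subtype.ext (k4_sq (σ : K4))
      have h2 := hcoc σ σ
      rw [hσσ, hc1] at h2
      have h3 := congrArg Prod.snd h2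
      simp only [Prod.snd_add, Prod.snd_zero, bAct] at h3
      funext j
      have h4 : (0 : ℤ) = (c σ).2 j + (c σ).2 j := congrFun h3 j
      show (c σ).2 j = (0 : ℤ)
      omega
    have hcoord : ∀ i : Fin m, ∃ b : MonoidAlgebra ℤ K4, ∀ σ : H,
        (c σ).1 i = MonoidAlgebra.of ℤ K4 (σ : K4) * b - b := by
      intro i
      apply coboundary H (fun σ => (c σ).1 i)
      intro σ τ
      have h5 := congrFun (congrArg Prod.fst (hcoc σ τ)) i
      simpa [bAct] using h5
    choose bf hbf using hcoord
    set b0 : BB m := (bf, 0) with hb0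
    have hcb : ∀ σ : H, c σ = bAct m (σ : K4) b0 - b0 := by
      intro σ
      have hform : bAct m (σ : K4) b0 - b0
          = ((fun i => MonoidAlgebra.of ℤ K4 (σ : K4) * bf i - bf i), 0) := by
        refine Prod.ext_iff.mpr ⟨?_, ?_⟩
        · funext i
          simp [bAct, hb0]
        · simp [bAct, hb0]
      rw [hform]
      exact Prod.ext_iff.mpr ⟨funext fun i => hbf i σ, hsnd σ⟩
    have hinv : ∀ γ ∈ H, ρ γ (φ b0) = φ b0 := by
      intro γ hγ
      have h6 : bAct m γ b0 = c ⟨γ, hγ⟩ + b0 := sub_eq_iff_eq_add.mp (hcb ⟨γ, hγ⟩).symm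
      rw [← hequiv, h6, map_add, hc0 ⟨γ, hγ⟩, zero_add]
    obtain ⟨b', hb'inv, hb'φ⟩ := part1 ρ φ hga hha hgb hhb hfa hfb H (φ b0) hinv
    refine ⟨b0 - b', ?_, ?_⟩
    · rw [map_sub, hb'φ, sub_self]
    · intro σ
      rw [bAct_sub, hb'inv (σ : K4) σ.2, hcb σ]
      abel
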